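/- Let G be a countable amenable group and A a finite alphabet, with G acting on A^G by the shift. Every regular Toeplitz configuration x ∈ A^G is a limit, with respect to the Weyl pseudometric D* (equivalently, D*({g : x_g ≠ y_g}) → 0), of a sequence of periodic configurations, where y ∈ A^G is periodic if Per_H(y) = G for some finite index subgroup H of G. -/

import Mathlib

open Filter
open scoped symmDiff

/-- The upper Banach density `D*(A) = inf_{F finite nonempty} sup_{g ∈ G} |A ∩ Fg|/|F|`. -/
noncomputable def upperBanachDensity {G : Type*} [Group G] (A : Set G) : ℝ :=
  ⨅ F : {F : Finset G // F.Nonempty},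
    ⨆ g : G, ((A ∩ ((fun f => f * g) '' (F.1 : Set G))).ncard : ℝ) / F.1.card

section Aux

variable {G : Type*} [Group G]

private lemma ubd_term_le_one (A : Set G) (F : Finset G) (hF : F.Nonempty) (g : G) :
    ((A ∩ ((fun f => f * g) '' (F : Set G))).ncard : ℝ) / F.card ≤ 1 := by
  have hfin : ((fun f => f * g) '' (F : Set G)).Finite := F.finite_toSet.image _
  have h1 : (A ∩ ((fun f => f * g) '' (F : Set G))).ncard ≤ F.card := by
    calc (A ∩ ((fun f => f * g) '' (F : Set G))).ncard
        ≤ ((fun f => f * g) '' (F : Set G)).ncard :=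
          Set.ncard_le_ncard Set.inter_subset_right hfin
      _ = (F : Set G).ncard := Set.ncard_image_of_injective _ (mul_left_injective g)
      _ = F.card := Set.ncard_coe_finset F
  rw [div_le_one (by exact_mod_cast hF.card_pos)]
  exact_mod_cast h1

private lemma ubd_bddBelow (A : Set G) :
    BddBelow (Set.range fun F : {F : Finset G // F.Nonempty} =>
      ⨆ g : G, ((A ∩ ((fun f => f * g) '' (F.1 : Set G))).ncard : ℝ) / F.1.card) := by
  refine ⟨0, ?_⟩
  rintro _ ⟨F, rfl⟩
  exact Real.iSup_nonneg fun g => by positivity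

private lemma ubd_mono {A B : Set G} (h : A ⊆ B) :
    upperBanachDensity A ≤ upperBanachDensity B := by
  refine ciInf_mono (ubd_bddBelow A) fun F => ?_
  refine ciSup_mono ⟨1, ?_⟩ fun g => ?_
  · rintro _ ⟨g, rfl⟩
    exact ubd_term_le_one B F.1 F.2 g
  · have hfin : (B ∩ ((fun f => f * g) '' (F.1 : Set G))).Finite :=
      (F.1.finite_toSet.image _).subset Set.inter_subset_right
    have hnum : (A ∩ ((fun f => f * g) '' (F.1 : Set G))).ncard
        ≤ (B ∩ ((fun f => f * g) '' (F.1 : Set G))).ncard :=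
      Set.ncard_le_ncard (Set.inter_subset_inter_left _ h) hfin
    gcongr

private lemma ubd_invariant_le (H : Subgroup G) [H.FiniteIndex] (A : Set G)
    (hA : ∀ h ∈ H, ∀ g : G, g ∈ A ↔ h * g ∈ A) :
    upperBanachDensity A ≤
      (({q : Quotient (QuotientGroup.rightRel H) | q.out ∈ A}).ncard : ℝ) /
        Nat.card (Quotient (QuotientGroup.rightRel H)) := by
  classical
  letI : Setoid G := QuotientGroup.rightRel H
  set Q := Quotient (QuotientGroup.rightRel H) with hQ
  haveI : Finite Q :=
    Finite.of_equiv _ (QuotientGroup.quotientRightRelEquivQuotientLeftRel H).symm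
  haveI : Fintype Q := Fintype.ofFinite Q
  set S : Set Q := {q : Q | q.out ∈ A} with hS
  set T : Finset G := Finset.univ.image (Quotient.out : Q → G) with hT
  have hTcard : T.card = Nat.card Q := by
    rw [hT, Finset.card_image_of_injective _ Quotient.out_injective, Finset.card_univ,
      Nat.card_eq_fintype_card]
  have hTne : T.Nonempty := by
    refine ⟨(Quotient.mk (QuotientGroup.rightRel H) (1 : G) : Q).out, ?_⟩
    simp [hT]
  -- key counting
  have key : ∀ g : G, (A ∩ ((fun f => f * g) '' (T : Set G))).ncard = S.ncard := by
    intro g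
    have him : A ∩ ((fun f => f * g) '' (T : Set G)) =
        (fun t => t * g) '' {t : G | t ∈ T ∧ t * g ∈ A} := by
      ext a
      constructor
      · rintro ⟨ha, t, ht, rfl⟩
        exact ⟨t, ⟨ht, ha⟩, rfl⟩
      · rintro ⟨t, ⟨ht, ha⟩, rfl⟩
        exact ⟨ha, t, ht, rfl⟩
    have hbij : Set.BijOn (fun t => (Quotient.mk _ (t * g) : Q))
        {t : G | t ∈ T ∧ t * g ∈ A} S := by
      refine ⟨?_, ?_, ?_⟩
      · rintro t ⟨_, ha⟩
        simp only [hS, Set.mem_setOf_eq]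
        set r : G := (Quotient.mk (QuotientGroup.rightRel H) (t * g) : Q).out with hr
        have hrel : r ≈ t * g := Quotient.mk_out (t * g)
        have hmem : (t * g) * r⁻¹ ∈ H := (QuotientGroup.rightRel_apply).mp hrel
        have h3 := hA _ hmem r
        have h2 : (t * g) * r⁻¹ * r = t * g := by group
        rw [h2] at h3
        exact h3.mpr ha
      · rintro t ⟨ht, _⟩ t' ⟨ht', _⟩ heq
        have hrel : (t' * g) * (t * g)⁻¹ ∈ H :=
          (QuotientGroup.rightRel_apply).mp (Quotient.exact heq)
        have hrel' : t' * t⁻¹ ∈ H := by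
          simpa [mul_assoc] using hrel
        have hmk : (Quotient.mk _ t : Q) = Quotient.mk _ t' :=
          Quotient.sound ((QuotientGroup.rightRel_apply).mpr hrel')
        simp only [hT, Finset.mem_image, Finset.mem_univ, true_and] at ht ht'
        obtain ⟨q, rfl⟩ := ht
        obtain ⟨q', rfl⟩ := ht'
        rw [Quotient.out_eq, Quotient.out_eq] at hmk
        rw [hmk]
      · rintro q hq
        refine ⟨(Quotient.mk _ (q.out * g⁻¹) : Q).out, ⟨?_, ?_⟩, ?_⟩
        · simp [hT]
        · -- q.out * g⁻¹ ≈ t, membership in A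
          set t : G := (Quotient.mk _ (q.out * g⁻¹) : Q).out with htdef
          have hrel : t ≈ q.out * g⁻¹ := Quotient.mk_out (q.out * g⁻¹)
          have hmem : (q.out * g⁻¹) * t⁻¹ ∈ H := (QuotientGroup.rightRel_apply).mp hrel
          have hmem' : (t * g) * q.out⁻¹ ∈ H := by
            have := H.inv_mem hmem
            simpa [mul_assoc] using this
          have h3 := hA _ hmem' q.out
          have h2 : (t * g) * q.out⁻¹ * q.out = t * g := by group
          rw [h2] at h3
          exact h3.mp hq
        · set t : G := (Quotient.mk _ (q.out * g⁻¹) : Q).out with htdef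
          have hrel : t ≈ q.out * g⁻¹ := Quotient.mk_out (q.out * g⁻¹)
          have hmem : (q.out * g⁻¹) * t⁻¹ ∈ H := (QuotientGroup.rightRel_apply).mp hrel
          have hmem' : q.out * (t * g)⁻¹ ∈ H := by
            simpa [mul_assoc] using hmem
          have h4 : (Quotient.mk (QuotientGroup.rightRel H) (t * g) : Q)
              = Quotient.mk (QuotientGroup.rightRel H) q.out :=
            Quotient.sound ((QuotientGroup.rightRel_apply).mpr hmem')
          show (Quotient.mk (QuotientGroup.rightRel H) (t * g) : Q) = q
          exact h4.trans (Quotient.out_eq q)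
    calc (A ∩ ((fun f => f * g) '' (T : Set G))).ncard
        = ((fun t => t * g) '' {t : G | t ∈ T ∧ t * g ∈ A}).ncard := by rw [him]
      _ = {t : G | t ∈ T ∧ t * g ∈ A}.ncard :=
          Set.ncard_image_of_injective _ (mul_left_injective g)
      _ = ((fun t => (Quotient.mk _ (t * g) : Q)) '' {t : G | t ∈ T ∧ t * g ∈ A}).ncard :=
          (Set.ncard_image_of_injOn hbij.injOn).symm
      _ = S.ncard := by rw [hbij.image_eq]
  have hle : upperBanachDensity A ≤
      ⨆ g : G, ((A ∩ ((fun f => f * g) '' (T : Set G))).ncard : ℝ) / T.card :=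
    ciInf_le (ubd_bddBelow A) ⟨T, hTne⟩
  have heq : (⨆ g : G, ((A ∩ ((fun f => f * g) '' (T : Set G))).ncard : ℝ) / T.card)
      = (S.ncard : ℝ) / Nat.card Q := by
    have : ∀ g : G, ((A ∩ ((fun f => f * g) '' (T : Set G))).ncard : ℝ) / T.card
        = (S.ncard : ℝ) / Nat.card Q := by
      intro g; rw [key g, hTcard]
    simp only [this]
    exact ciSup_const
  rw [heq] at hle
  exact hle

end Aux

/-- In a countable amenable group `G` with finite alphabet `A`, every
regular Toeplitz configuration `x` (there is a nested sequence `{H n}` of finite index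
subgroups with `⋃ₙ Per_{Hₙ}(x) = G` and `supₙ D*(Per_{Hₙ}(x)) = 1`) is a limit, in the
Weyl pseudometric `D*({g : x g ≠ y g})`, of periodic configurations. -/
theorem regular_toeplitz_weyl_limit_of_periodic {G A : Type*} [Group G] [Countable G]
    [DecidableEq G] [Finite A]
    (hamen : ∃ F : ℕ → Finset G, (∀ n, (F n).Nonempty) ∧ ∀ a : G, Tendsto
      (fun n => ((((F n).image (a * ·)) ∆ (F n)).card : ℝ) / (F n).card) atTop (nhds 0))
    (x : G → A)
    (H : ℕ → Subgroup G) (hfi : ∀ n, (H n).FiniteIndex) (hnest : ∀ n, H (n + 1) ≤ H n)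
    (hcover : ∀ g : G, ∃ n : ℕ, ∀ γ ∈ H n, x (γ * g) = x g)
    (hreg : (⨆ n : ℕ, upperBanachDensity {g : G | ∀ γ ∈ H n, x (γ * g) = x g}) = 1) :
    ∀ ε > (0 : ℝ), ∃ y : G → A,
      (∃ H' : Subgroup G, H'.FiniteIndex ∧ ∀ g : G, ∀ h ∈ H', y (h * g) = y g) ∧
      upperBanachDensity {g : G | x g ≠ y g} < ε := by
  intro ε hε
  have h1 : (1 : ℝ) - ε < ⨆ n : ℕ, upperBanachDensity {g : G | ∀ γ ∈ H n, x (γ * g) = x g} := by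
    rw [hreg]; linarith
  obtain ⟨n, hn⟩ := exists_lt_of_lt_ciSup h1
  haveI := hfi n
  set Hn := H n with hHn
  set Per : Set G := {g : G | ∀ γ ∈ Hn, x (γ * g) = x g} with hPer
  -- invariance of Per under left multiplication by Hn
  have hinv : ∀ h ∈ Hn, ∀ g : G, g ∈ Per ↔ h * g ∈ Per := by
    intro h hh g
    constructor
    · intro hg γ hγ
      have e1 : x (γ * (h * g)) = x g := by
        rw [← mul_assoc]; exact hg _ (Hn.mul_mem hγ hh)
      rw [e1, hg h hh]
    · intro hg γ hγ
      have e1 : x (γ * g) = x (h * g) := by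
        have := hg (γ * h⁻¹) (Hn.mul_mem hγ (Hn.inv_mem hh))
        simpa [mul_assoc] using this
      have e2 : x g = x (h * g) := by
        have := hg h⁻¹ (Hn.inv_mem hh)
        simpa [← mul_assoc] using this
      rw [e1, ← e2]
  have hinvc : ∀ h ∈ Hn, ∀ g : G, g ∈ Perᶜ ↔ h * g ∈ Perᶜ := by
    intro h hh g
    exact not_congr (hinv h hh g)
  -- the quotient by right cosets of Hn
  letI : Setoid G := QuotientGroup.rightRel Hn
  set Q := Quotient (QuotientGroup.rightRel Hn) with hQdef
  haveI : Finite Q :=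
    Finite.of_equiv _ (QuotientGroup.quotientRightRelEquivQuotientLeftRel Hn).symm
  haveI : Nonempty Q := ⟨Quotient.mk (QuotientGroup.rightRel Hn) 1⟩
  -- the periodic configuration
  set y : G → A := fun g => x ((Quotient.mk (QuotientGroup.rightRel Hn) g : Q).out) with hy
  have hyper : ∀ g : G, ∀ h ∈ Hn, y (h * g) = y g := by
    intro g h hh
    have hmk : (Quotient.mk (QuotientGroup.rightRel Hn) (h * g) : Q)
        = Quotient.mk (QuotientGroup.rightRel Hn) g := by
      refine Quotient.sound ((QuotientGroup.rightRel_apply).mpr ?_)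
      have : g * (h * g)⁻¹ = h⁻¹ := by group
      rw [this]; exact Hn.inv_mem hh
    simp only [hy, hmk]
  -- where x and y agree
  have hsub : {g : G | x g ≠ y g} ⊆ Perᶜ := by
    intro g hg
    intro hgPer
    apply hg
    set r : G := (Quotient.mk (QuotientGroup.rightRel Hn) g : Q).out with hr
    have hrel : r ≈ g := Quotient.mk_out g
    have hmem : g * r⁻¹ ∈ Hn := (QuotientGroup.rightRel_apply).mp hrel
    have hmem' : r * g⁻¹ ∈ Hn := by
      have := Hn.inv_mem hmem; simpa using this
    have := hgPer (r * g⁻¹) hmem'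
    have e1 : r * g⁻¹ * g = r := by group
    rw [e1] at this
    exact this.symm
  -- density estimates
  set S : Set Q := {q : Q | q.out ∈ Per} with hS
  have hAle := ubd_invariant_le Hn Per hinv
  have hBle := ubd_invariant_le Hn Perᶜ hinvc
  have hcompl : {q : Q | q.out ∈ Perᶜ} = Sᶜ := by
    ext q; simp [hS]
  rw [hcompl] at hBle
  have hsum : S.ncard + Sᶜ.ncard = Nat.card Q := Set.ncard_add_ncard_compl S S.toFinite
  have hmpos : 0 < Nat.card Q := Nat.card_pos
  have hmposR : (0 : ℝ) < (Nat.card Q : ℝ) := by exact_mod_cast hmpos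
  have hsumR : (S.ncard : ℝ) + (Sᶜ.ncard : ℝ) = (Nat.card Q : ℝ) := by exact_mod_cast hsum
  have hdiv : (S.ncard : ℝ) / Nat.card Q + (Sᶜ.ncard : ℝ) / Nat.card Q = 1 := by
    rw [← add_div, hsumR, div_self (ne_of_gt hmposR)]
  have hfinal : upperBanachDensity {g : G | x g ≠ y g} < ε := by
    have hmono := ubd_mono hsub
    have : (1 : ℝ) - ε < (S.ncard : ℝ) / Nat.card Q := lt_of_lt_of_le hn hAle
    linarith
  exact ⟨y, ⟨Hn, hfi n, fun g h hh => hyper g h hh⟩, hfinal⟩
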